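/- In the two-dimensional yarmulke Morse geometry, write Z = √(ζ−1) and let q = (a,0) with 0 < a < ε. Then the chronological future of q is the complement in N of the closed region bounded by the two future-directed null spirals from q: I⁺(q) = {p ∈ N : |p| > a e^{|φ_p|/Z}}, where φ_p ∈ (−π, π] is the angle of p (i.e. p = |p|(cos φ_p, sin φ_p)). -/

import Mathlib

noncomputable section

open Set
open MeasureTheory

/-- The punctured disc `N = {p : 0 < |p| < ε}` (Euclidean norm). -/
def NY (ε : ℝ) : Set (ℝ × ℝ) :=
  {p | 0 < p.1 ^ 2 + p.2 ^ 2 ∧ p.1 ^ 2 + p.2 ^ 2 < ε ^ 2}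

/-- Euclidean dot product on ℝ². -/
def dot2 (a b : ℝ × ℝ) : ℝ := a.1 * b.1 + a.2 * b.2

/-- Planar cross product `p × w = p₁w₂ − p₂w₁`. -/
def cross2 (a b : ℝ × ℝ) : ℝ := a.1 * b.2 - a.2 * b.1

/-- The yarmulke Morse metric (quadratic form) built from `f(p) = |p|²`:
`g_p(w,w) = 4|p|²|w|² − 4ζ(p·w)²`. -/
def gY (ζ : ℝ) (p w : ℝ × ℝ) : ℝ :=
  4 * dot2 p p * dot2 w w - 4 * ζ * dot2 p w ^ 2

/-- A future-directed timelike curve: a C¹ curve in `N` with everywhere timelike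
tangent satisfying the future-pointing condition `γ(t)·γ'(t) > 0`. -/
def TimelikeY (ζ ε : ℝ) (γ γ' : ℝ → ℝ × ℝ) : Prop :=
  (∀ t ∈ Icc (0 : ℝ) 1, HasDerivAt γ (γ' t) t) ∧
  ContinuousOn γ' (Icc (0 : ℝ) 1) ∧
  (∀ t ∈ Icc (0 : ℝ) 1, γ t ∈ NY ε) ∧
  (∀ t ∈ Icc (0 : ℝ) 1, gY ζ (γ t) (γ' t) < 0) ∧
  (∀ t ∈ Icc (0 : ℝ) 1, 0 < dot2 (γ t) (γ' t))

/-- The chronology relation `q ≪ p`. -/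
def chronY (ζ ε : ℝ) (q p : ℝ × ℝ) : Prop :=
  ∃ γ γ', TimelikeY ζ ε γ γ' ∧ γ 0 = q ∧ γ 1 = p

def IplusY (ζ ε : ℝ) (q : ℝ × ℝ) : Set (ℝ × ℝ) := {p ∈ NY ε | chronY ζ ε q p}

def IminusY (ζ ε : ℝ) (q : ℝ × ℝ) : Set (ℝ × ℝ) := {p ∈ NY ε | chronY ζ ε p q}

/-- The angle `φ_p ∈ (−π, π]` of a point of the plane. -/
def ang (p : ℝ × ℝ) : ℝ := Complex.arg ((p.1 : ℂ) + (p.2 : ℂ) * Complex.I)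

lemma gY_spiral (ζ ρ c φ co si : ℝ) (h : si ^ 2 + co ^ 2 = 1) :
    gY ζ (ρ * co, ρ * si) (ρ * (c * co - φ * si), ρ * (c * si + φ * co))
      = 4 * ρ ^ 4 * (φ ^ 2 - (ζ - 1) * c ^ 2) := by
  simp only [gY, dot2]
  linear_combination (4 * ρ ^ 4 * (φ ^ 2 - (ζ - 1) * c ^ 2) * (si ^ 2 + co ^ 2 + 1)) * h

lemma dot_spiral (ρ c φ co si : ℝ) (h : si ^ 2 + co ^ 2 = 1) :
    dot2 (ρ * co, ρ * si) (ρ * (c * co - φ * si), ρ * (c * si + φ * co)) = c * ρ ^ 2 := by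
  simp only [dot2]
  linear_combination (c * ρ ^ 2) * h

lemma sq_spiral (ρ co si : ℝ) (h : si ^ 2 + co ^ 2 = 1) :
    (ρ * co) ^ 2 + (ρ * si) ^ 2 = ρ ^ 2 := by
  linear_combination (ρ ^ 2) * h

-- Easy direction: construction of the logarithmic spiral.
lemma spiral (ζ ε a : ℝ) (hζ : 1 < ζ) (hε : 0 < ε) (ha : 0 < a) (haε : a < ε)
    (p : ℝ × ℝ) (hpN : p ∈ NY ε)
    (hlt : a * Real.exp (|ang p| / Real.sqrt (ζ - 1)) < Real.sqrt (p.1 ^ 2 + p.2 ^ 2)) :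
    chronY ζ ε (a, 0) p := by
  have hZ : 0 < Real.sqrt (ζ - 1) := Real.sqrt_pos.2 (by linarith)
  set Z := Real.sqrt (ζ - 1) with hZdef
  have hZ2 : Z ^ 2 = ζ - 1 := Real.sq_sqrt (by linarith)
  set r := Real.sqrt (p.1 ^ 2 + p.2 ^ 2) with hrdef
  have hr0 : 0 < r := Real.sqrt_pos.2 hpN.1
  have hrε : r < ε := (Real.sqrt_lt' hε).2 hpN.2
  set φ := ang p with hφdef
  have har : a < r := lt_of_le_of_lt (le_mul_of_one_le_right ha.le
    (Real.one_le_exp (by positivity))) hlt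
  set c := Real.log (r / a) with hcdef
  have hc0 : 0 < c := Real.log_pos ((one_lt_div ha).2 har)
  have hexp : a * Real.exp c = r := by
    rw [hcdef, Real.exp_log (by positivity)]; field_simp
  have hφc : |φ| < Z * c := by
    rw [← hexp] at hlt
    have h2 : Real.exp (|φ| / Z) < Real.exp c := (mul_lt_mul_iff_right₀ ha).1 hlt
    have h1 : |φ| / Z < c := Real.exp_lt_exp.1 h2
    have := (div_lt_iff₀ hZ).1 h1
    linarith
  set ρ : ℝ → ℝ := fun t => a * Real.exp (c * t) with hρdef
  have hρpos : ∀ t, 0 < ρ t := fun t => by positivity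
  refine ⟨fun t => (ρ t * Real.cos (φ * t), ρ t * Real.sin (φ * t)),
    fun t => (ρ t * (c * Real.cos (φ * t) - φ * Real.sin (φ * t)),
              ρ t * (c * Real.sin (φ * t) + φ * Real.cos (φ * t))), ?_, ?_, ?_⟩
  · have hρd : ∀ t, HasDerivAt ρ (c * ρ t) t := by
      intro t
      have h1 : HasDerivAt (fun t : ℝ => c * t) c t := by
        simpa using (hasDerivAt_id t).const_mul c
      have := (h1.exp).const_mul a
      exact this.congr_deriv (by simp [hρdef]; ring)
    have hcosd : ∀ t, HasDerivAt (fun t => Real.cos (φ * t)) (-Real.sin (φ * t) * φ) t := by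
      intro t
      have h1 : HasDerivAt (fun t : ℝ => φ * t) φ t := by
        simpa using (hasDerivAt_id t).const_mul φ
      exact h1.cos
    have hsind : ∀ t, HasDerivAt (fun t => Real.sin (φ * t)) (Real.cos (φ * t) * φ) t := by
      intro t
      have h1 : HasDerivAt (fun t : ℝ => φ * t) φ t := by
        simpa using (hasDerivAt_id t).const_mul φ
      exact h1.sin
    refine ⟨fun t _ => ?_, ?_, fun t ht => ?_, fun t _ => ?_, fun t _ => ?_⟩
    · refine HasDerivAt.prodMk ?_ ?_
      · have := (hρd t).mul (hcosd t)
        exact this.congr_deriv (by ring)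
      · have := (hρd t).mul (hsind t)
        exact this.congr_deriv (by ring)
    · apply Continuous.continuousOn; fun_prop
    · have hkey := sq_spiral (ρ t) _ _ (Real.sin_sq_add_cos_sq (φ * t))
      constructor
      · rw [hkey]; positivity
      · rw [hkey]
        have hle : ρ t ≤ r := by
          rw [← hexp]
          have h4 : Real.exp (c * t) ≤ Real.exp c :=
            Real.exp_le_exp.2 (by nlinarith [ht.2, hc0])
          exact mul_le_mul_of_nonneg_left h4 ha.le
        nlinarith [hρpos t]
    · have hφ2 : φ ^ 2 < (ζ - 1) * c ^ 2 := by
        have h3 := mul_self_lt_mul_self (abs_nonneg φ) hφc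
        rw [abs_mul_abs_self] at h3
        calc φ ^ 2 = φ * φ := sq φ
        _ < Z * c * (Z * c) := h3
        _ = Z ^ 2 * c ^ 2 := by ring
        _ = (ζ - 1) * c ^ 2 := by rw [hZ2]
      rw [gY_spiral ζ (ρ t) c φ _ _ (Real.sin_sq_add_cos_sq (φ * t))]
      have h5 : 0 < ρ t ^ 4 := by positivity
      nlinarith [mul_pos h5 (sub_pos.2 hφ2)]
    · rw [dot_spiral (ρ t) c φ _ _ (Real.sin_sq_add_cos_sq (φ * t))]
      have := hρpos t
      positivity
  · simp [hρdef]
  · have hz : ((p.1 : ℂ) + (p.2 : ℂ) * Complex.I) ≠ 0 := by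
      intro h
      have h1 : Complex.normSq ((p.1 : ℂ) + (p.2 : ℂ) * Complex.I) = 0 := by rw [h]; simp
      rw [Complex.normSq_add_mul_I] at h1
      exact absurd h1 (ne_of_gt hpN.1)
    have habs : ‖(p.1 : ℂ) + (p.2 : ℂ) * Complex.I‖ = r := by
      rw [Complex.norm_def, Complex.normSq_add_mul_I]
    have hcos : Real.cos φ = p.1 / r := by
      rw [hφdef, ang, Complex.cos_arg hz, habs]; simp
    have hsin : Real.sin φ = p.2 / r := by
      rw [hφdef, ang, Complex.sin_arg, habs]; simp
    have : ρ 1 = r := by rw [hρdef]; simpa using hexp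
    ext <;> simp only [this, mul_one, hcos, hsin] <;> field_simp


lemma forward (ζ ε a : ℝ) (hζ : 1 < ζ) (hε : 0 < ε) (ha : 0 < a)
    (p : ℝ × ℝ) (hch : chronY ζ ε (a, 0) p) :
    a * Real.exp (|ang p| / Real.sqrt (ζ - 1)) < Real.sqrt (p.1 ^ 2 + p.2 ^ 2) := by
  obtain ⟨γ, γ', ⟨hd, hc', hN, hg, hfut⟩, h0, h1⟩ := hch
  have hZ : 0 < Real.sqrt (ζ - 1) := Real.sqrt_pos.2 (by linarith)
  set Z := Real.sqrt (ζ - 1) with hZdef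
  have hZ2 : Z ^ 2 = ζ - 1 := Real.sq_sqrt (by linarith)
  set z : ℝ → ℂ := fun t => ((γ t).1 : ℂ) + ((γ t).2 : ℂ) * Complex.I with hzdef
  set w : ℝ → ℂ := fun t => ((γ' t).1 : ℂ) + ((γ' t).2 : ℂ) * Complex.I with hwdef
  have hP : ∀ t ∈ Icc (0:ℝ) 1, 0 < Complex.normSq (z t) := by
    intro t ht
    rw [hzdef]; simp only [Complex.normSq_add_mul_I]
    exact (hN t ht).1
  have hzne : ∀ t ∈ Icc (0:ℝ) 1, z t ≠ 0 := by
    intro t ht heq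
    have := hP t ht
    rw [heq, map_zero] at this
    exact lt_irrefl _ this
  have hzd : ∀ t ∈ Icc (0:ℝ) 1, HasDerivAt z (w t) t := by
    intro t ht
    have h1' : HasDerivAt (fun s => (γ s).1) ((γ' t).1) t := by
      have := (ContinuousLinearMap.fst ℝ ℝ ℝ).hasFDerivAt.comp_hasDerivAt t (hd t ht)
      simpa [Function.comp_def] using this
    have h2' : HasDerivAt (fun s => (γ s).2) ((γ' t).2) t := by
      have := (ContinuousLinearMap.snd ℝ ℝ ℝ).hasFDerivAt.comp_hasDerivAt t (hd t ht)
      simpa [Function.comp_def] using this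
    exact (h1'.ofReal_comp).add ((h2'.ofReal_comp).mul_const Complex.I)
  have hγc : ContinuousOn γ (Icc 0 1) := fun t ht => (hd t ht).continuousAt.continuousWithinAt
  have hzc : ContinuousOn z (Icc 0 1) := by
    refine ContinuousOn.add ?_ (ContinuousOn.mul ?_ continuousOn_const)
    · exact Complex.continuous_ofReal.comp_continuousOn hγc.fst
    · exact Complex.continuous_ofReal.comp_continuousOn hγc.snd
  have hwc : ContinuousOn w (Icc 0 1) := by
    refine ContinuousOn.add ?_ (ContinuousOn.mul ?_ continuousOn_const)
    · exact Complex.continuous_ofReal.comp_continuousOn hc'.fst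
    · exact Complex.continuous_ofReal.comp_continuousOn hc'.snd
  set ω : ℝ → ℂ := fun t => w t / z t with hωdef
  have hωc : ContinuousOn ω (Icc 0 1) := hwc.div hzc hzne
  have hInt : ∀ t ∈ Icc (0:ℝ) 1, IntervalIntegrable ω volume 0 t := fun t ht =>
    (hωc.mono (Icc_subset_Icc le_rfl ht.2)).intervalIntegrable_of_Icc ht.1
  set L : ℝ → ℂ := fun t => ∫ s in (0:ℝ)..t, ω s with hLdef
  have hLc : ContinuousOn L (Icc 0 1) := by
    have h5 : IntegrableOn ω (uIcc (0:ℝ) 1) volume := by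
      rw [uIcc_of_le zero_le_one]
      exact hωc.integrableOn_Icc
    have := intervalIntegral.continuousOn_primitive_interval (f := ω) (μ := volume)
      (a := 0) (b := 1) h5
    rwa [uIcc_of_le zero_le_one] at this
  have hLd : ∀ t ∈ Ioo (0:ℝ) 1, HasDerivAt L (ω t) t := by
    intro t ht
    have hmem : Icc (0:ℝ) 1 ∈ nhds t := Icc_mem_nhds ht.1 ht.2
    refine intervalIntegral.integral_hasDerivAt_right (hInt t (Ioo_subset_Icc_self ht))
      ⟨Icc 0 1, hmem, hωc.aestronglyMeasurable measurableSet_Icc⟩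
      (hωc.continuousAt hmem)
  set h : ℝ → ℂ := fun t => z t * Complex.exp (-L t) with hhdef
  have hhc : ContinuousOn h (Icc 0 1) :=
    hzc.mul (Complex.continuous_exp.comp_continuousOn hLc.neg)
  have hconst : ∀ s ∈ Ioo (0:ℝ) 1, h 1 = h s := by
    intro s hs
    have key := constant_of_has_deriv_right_zero (f := h) (a := s) (b := 1)
      (hhc.mono (Icc_subset_Icc hs.1.le le_rfl)) ?_
    · exact key 1 ⟨hs.2.le, le_rfl⟩
    · intro x hx
      have hx' : x ∈ Ioo (0:ℝ) 1 := ⟨lt_of_lt_of_le hs.1 hx.1, hx.2⟩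
      have hxI : x ∈ Icc (0:ℝ) 1 := Ioo_subset_Icc_self hx'
      have hD := (hzd x hxI).mul (((hLd x hx').neg).cexp)
      have hzero : w x * Complex.exp (-L x) + z x * (Complex.exp (-L x) * -ω x) = 0 := by
        rw [hωdef]
        field_simp [hzne x hxI]
        ring
      simp only [Pi.neg_apply] at hD
      rw [hzero] at hD
      exact hD.hasDerivWithinAt
  have hL0 : L 0 = 0 := intervalIntegral.integral_same
  have h10 : h 0 = h 1 := by
    have hne : (nhdsWithin (0:ℝ) (Ioo (0:ℝ) 1)).NeBot := by
      rw [← mem_closure_iff_nhdsWithin_neBot, closure_Ioo (by norm_num : (0:ℝ) ≠ 1)]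
      exact ⟨le_rfl, zero_le_one⟩
    have t1 : Filter.Tendsto h (nhdsWithin (0:ℝ) (Ioo (0:ℝ) 1)) (nhds (h 0)) :=
      (hhc.continuousWithinAt ⟨le_rfl, zero_le_one⟩).mono Ioo_subset_Icc_self
    have t2 : Filter.Tendsto h (nhdsWithin (0:ℝ) (Ioo (0:ℝ) 1)) (nhds (h 1)) := by
      refine Filter.Tendsto.congr' ?_ (tendsto_const_nhds (x := h 1))
      exact eventually_mem_nhdsWithin.mono fun s hs => hconst s hs
    exact tendsto_nhds_unique t1 t2
  have hz0 : z 0 = (a : ℂ) := by simp [hzdef, h0]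
  have hz1 : z 1 = (a : ℂ) * Complex.exp (L 1) := by
    have h6 : z 1 * Complex.exp (-L 1) = (a : ℂ) := by
      have := h10.symm
      rw [hhdef] at this
      simpa [hL0, hz0] using this
    calc z 1 = z 1 * Complex.exp (-L 1) * Complex.exp (L 1) := by
          rw [mul_assoc, ← Complex.exp_add]; simp
    _ = (a:ℂ) * Complex.exp (L 1) := by rw [h6]
  have hre : (L 1).re = ∫ s in (0:ℝ)..1, (ω s).re :=
    (Complex.reCLM.intervalIntegral_comp_comm (hInt 1 ⟨zero_le_one, le_rfl⟩)).symm
  have him : (L 1).im = ∫ s in (0:ℝ)..1, (ω s).im :=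
    (Complex.imCLM.intervalIntegral_comp_comm (hInt 1 ⟨zero_le_one, le_rfl⟩)).symm
  -- pointwise inequalities
  have hreω : ∀ t ∈ Icc (0:ℝ) 1, (ω t).re = dot2 (γ t) (γ' t) / Complex.normSq (z t) := by
    intro t ht
    rw [hωdef]
    simp only [Complex.div_re, hzdef, hwdef, Complex.add_re, Complex.ofReal_re,
      Complex.mul_re, Complex.ofReal_im, Complex.I_re, Complex.I_im, Complex.add_im,
      Complex.mul_im, dot2]
    ring
  have himω : ∀ t ∈ Icc (0:ℝ) 1, (ω t).im = cross2 (γ t) (γ' t) / Complex.normSq (z t) := by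
    intro t ht
    rw [hωdef]
    simp only [Complex.div_im, hzdef, hwdef, Complex.add_re, Complex.ofReal_re,
      Complex.mul_re, Complex.ofReal_im, Complex.I_re, Complex.I_im, Complex.add_im,
      Complex.mul_im, cross2]
    ring
  have hptre : ∀ t ∈ Icc (0:ℝ) 1, 0 < (ω t).re := by
    intro t ht
    rw [hreω t ht]
    exact div_pos (hfut t ht) (hP t ht)
  have hpt : ∀ t ∈ Icc (0:ℝ) 1, |(ω t).im| < Z * (ω t).re := by
    intro t ht
    have hPt := hP t ht
    have hDpos := hfut t ht
    have hlag : Complex.normSq (z t) * dot2 (γ' t) (γ' t)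
        = dot2 (γ t) (γ' t) ^ 2 + cross2 (γ t) (γ' t) ^ 2 := by
      rw [hzdef]; simp only [Complex.normSq_add_mul_I, dot2, cross2]; ring
    have hgt := hg t ht
    rw [gY] at hgt
    have hCsq : cross2 (γ t) (γ' t) ^ 2 < (ζ - 1) * dot2 (γ t) (γ' t) ^ 2 := by
      have hns' : dot2 (γ t) (γ t) = Complex.normSq (z t) := by
        rw [hzdef]; simp only [Complex.normSq_add_mul_I, dot2]; ring
      rw [hns'] at hgt
      nlinarith [hlag, hgt]
    have hCabs : |cross2 (γ t) (γ' t)| < Z * dot2 (γ t) (γ' t) := by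
      have hZD : 0 < Z * dot2 (γ t) (γ' t) := mul_pos hZ hDpos
      rw [abs_lt]
      constructor
      · nlinarith [sq_nonneg (cross2 (γ t) (γ' t) + Z * dot2 (γ t) (γ' t)), hZ2]
      · nlinarith [sq_nonneg (cross2 (γ t) (γ' t) - Z * dot2 (γ t) (γ' t)), hZ2]
    rw [hreω t ht, himω t ht, abs_div, abs_of_pos hPt, ← mul_div_assoc]
    exact (div_lt_div_iff_of_pos_right hPt).2 hCabs
  -- integral inequality
  have hvc : ContinuousOn (fun t => |(ω t).im|) (Icc 0 1) :=
    continuous_abs.comp_continuousOn (Complex.continuous_im.comp_continuousOn hωc)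
  have huc : ContinuousOn (fun t => Z * (ω t).re) (Icc 0 1) :=
    continuousOn_const.mul (Complex.continuous_re.comp_continuousOn hωc)
  have hstrict : (∫ s in (0:ℝ)..1, |(ω s).im|) < ∫ s in (0:ℝ)..1, Z * (ω s).re := by
    refine intervalIntegral.integral_lt_integral_of_continuousOn_of_le_of_exists_lt
      zero_lt_one hvc huc (fun x hx => (hpt x ⟨hx.1.le, hx.2⟩).le) ?_
    exact ⟨0, ⟨le_rfl, zero_le_one⟩, hpt 0 ⟨le_rfl, zero_le_one⟩⟩
  have himlt : |(L 1).im| < Z * (L 1).re := by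
    calc |(L 1).im| = |∫ s in (0:ℝ)..1, (ω s).im| := by rw [him]
    _ ≤ ∫ s in (0:ℝ)..1, |(ω s).im| :=
        intervalIntegral.abs_integral_le_integral_abs zero_le_one
    _ < ∫ s in (0:ℝ)..1, Z * (ω s).re := hstrict
    _ = Z * ∫ s in (0:ℝ)..1, (ω s).re := intervalIntegral.integral_const_mul Z _
    _ = Z * (L 1).re := by rw [hre]
  -- relate to p
  have habs1 : ‖z 1‖ = a * Real.exp ((L 1).re) := by
    rw [hz1, norm_mul, Complex.norm_exp, Complex.norm_real, Real.norm_eq_abs, abs_of_pos ha]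
  have hz1p : z 1 = (p.1 : ℂ) + (p.2 : ℂ) * Complex.I := by simp [hzdef, h1]
  have hsqrt : Real.sqrt (p.1 ^ 2 + p.2 ^ 2) = ‖z 1‖ := by
    rw [hz1p, Complex.norm_def, Complex.normSq_add_mul_I]
  have hangp : ang p = Complex.arg (z 1) := by
    rw [ang, hz1p]
  have hzabs_pos : (0:ℝ) < ‖z 1‖ := by rw [habs1]; positivity
  have hexpeq : Complex.exp (((L 1).im : ℂ) * Complex.I)
      = Complex.exp ((Complex.arg (z 1) : ℂ) * Complex.I) := by
    have e1 := Complex.norm_mul_exp_arg_mul_I (z 1)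
    have e2 : z 1 = (‖z 1‖ : ℂ) * Complex.exp (((L 1).im : ℂ) * Complex.I) := by
      rw [habs1]
      calc z 1 = (a:ℂ) * Complex.exp (L 1) := hz1
      _ = (a:ℂ) * Complex.exp (((L 1).re : ℂ) + ((L 1).im : ℂ) * Complex.I) := by
            rw [Complex.re_add_im]
      _ = (a:ℂ) * (Complex.exp ((L 1).re : ℂ) * Complex.exp (((L 1).im : ℂ) * Complex.I)) := by
            rw [Complex.exp_add]
      _ = ((a * Real.exp ((L 1).re) : ℝ) : ℂ) * Complex.exp (((L 1).im : ℂ) * Complex.I) := by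
            rw [← Complex.ofReal_exp]; push_cast; ring
    have e3 : (‖z 1‖ : ℂ) * Complex.exp ((Complex.arg (z 1) : ℂ) * Complex.I)
        = (‖z 1‖ : ℂ) * Complex.exp (((L 1).im : ℂ) * Complex.I) := e1.trans e2
    have hne0 : ((‖z 1‖ : ℝ) : ℂ) ≠ 0 := by
      exact_mod_cast hzabs_pos.ne'
    exact (mul_left_cancel₀ hne0 e3).symm
  obtain ⟨n, hn⟩ := Complex.exp_eq_exp_iff_exists_int.1 hexpeq
  have hnim : (L 1).im = Complex.arg (z 1) + (n : ℝ) * (2 * Real.pi) := by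
    have := congrArg Complex.im hn
    simpa using this
  have hargle : |Complex.arg (z 1)| ≤ |(L 1).im| := by
    rcases eq_or_ne n 0 with hn0 | hn0
    · rw [hn0] at hnim
      simp only [Int.cast_zero, zero_mul, add_zero] at hnim
      rw [hnim]
    · have hπ := Real.pi_pos
      have habsarg : |Complex.arg (z 1)| ≤ Real.pi := Complex.abs_arg_le_pi (z 1)
      have h2 : 2 * Real.pi ≤ |(n:ℝ) * (2 * Real.pi)| := by
        rw [abs_mul, abs_of_pos (by positivity : (0:ℝ) < 2 * Real.pi)]
        have h7 : (1:ℝ) ≤ |(n:ℝ)| := by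
          rw [← Int.cast_abs]
          exact_mod_cast Int.one_le_abs hn0
        nlinarith
      have h3 : |(n:ℝ) * (2 * Real.pi)| ≤ |(L 1).im| + |Complex.arg (z 1)| := by
        have h4 : (n:ℝ) * (2 * Real.pi) = (L 1).im + -(Complex.arg (z 1)) := by
          linarith [hnim]
        rw [h4]
        calc |(L 1).im + -(Complex.arg (z 1))| ≤ |(L 1).im| + |-(Complex.arg (z 1))| :=
              abs_add_le _ _
        _ = |(L 1).im| + |Complex.arg (z 1)| := by rw [abs_neg]
      linarith
  -- conclude
  have hfin : |Complex.arg (z 1)| < Z * (L 1).re := lt_of_le_of_lt hargle himlt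
  rw [hangp, hsqrt, habs1]
  have h8 : |Complex.arg (z 1)| / Z < (L 1).re := by
    rw [div_lt_iff₀ hZ]
    nlinarith [hfin]
  have h9 := Real.exp_lt_exp.2 h8
  nlinarith [h9, ha]

/-- in the yarmulke, the chronological future of `q = (a,0)` (`0 < a < ε`)
is the complement in `N` of the closed region bounded by the two future-directed null
spirals: `I⁺(q) = {p ∈ N : |p| > a e^{|φ_p|/Z}}` with `Z = √(ζ−1)`. -/
theorem stmt8 (ζ ε a : ℝ) (hζ : 1 < ζ) (hε : 0 < ε) (ha : 0 < a) (haε : a < ε) :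
    IplusY ζ ε (a, 0) =
      {p ∈ NY ε |
        a * Real.exp (|ang p| / Real.sqrt (ζ - 1)) < Real.sqrt (p.1 ^ 2 + p.2 ^ 2)} := by
  ext p
  simp only [IplusY, Set.mem_sep_iff, Set.mem_setOf_eq]
  constructor
  · rintro ⟨hpN, hch⟩
    exact ⟨hpN, forward ζ ε a hζ hε ha p hch⟩
  · rintro ⟨hpN, hlt⟩
    exact ⟨hpN, spiral ζ ε a hζ hε ha haε p hpN hlt⟩
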